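/- Let n(ω) = (1/π)·(Γ/2)/(ω² + (Γ/2)²) be a Lorentzian of width Γ > 0 centered at 0. Then the principal value integral P∫ n(ω')/(ω − ω') dω' equals ω/(ω² + (Γ/2)²) for every real ω, and consequently Γ(ω) := 2π n(ω) / ([P∫ n(ω')/(ω−ω') dω']² + π² n(ω)²) = Γ is constant. -/

import Mathlib

open Real MeasureTheory Filter Topology Set

namespace LorentzPV

noncomputable def Cc (a ω : ℝ) : ℝ := a / (π * (ω ^ 2 + a ^ 2))

noncomputable def G (a ω : ℝ) : ℝ → ℝ := fun x =>
  Cc a ω * ((1/2) * Real.log (x ^ 2 + a ^ 2) - Real.log (x - ω)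
    + (ω / a) * Real.arctan (x / a))

noncomputable def f (a ω : ℝ) : ℝ → ℝ := fun x =>
  1 / π * (a / (x ^ 2 + a ^ 2)) / (ω - x)

lemma hasDerivAt_G {a : ℝ} (ha : 0 < a) {ω x : ℝ} (hx : x ≠ ω) :
    HasDerivAt (G a ω) (f a ω x) x := by
  have hπ := Real.pi_pos
  have h2 : x ^ 2 + a ^ 2 ≠ 0 := by positivity
  have hxω : x - ω ≠ 0 := sub_ne_zero.mpr hx
  have hd1 : HasDerivAt (fun y : ℝ => y ^ 2 + a ^ 2) (2 * x) x := by
    simpa using (hasDerivAt_pow 2 x).add_const (a ^ 2)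
  have h1 : HasDerivAt (fun y : ℝ => Real.log (y ^ 2 + a ^ 2)) (2 * x / (x ^ 2 + a ^ 2)) x :=
    hd1.log h2
  have hl : HasDerivAt (fun y : ℝ => Real.log (y - ω)) (1 / (x - ω)) x := by
    simpa using ((hasDerivAt_id x).sub_const ω).log hxω
  have harc : HasDerivAt (fun y : ℝ => Real.arctan (y / a)) (1 / (1 + (x / a) ^ 2) * (1 / a)) x := by
    have := (Real.hasDerivAt_arctan (x / a)).comp x ((hasDerivAt_id x).div_const a)
    exact this
  have H := (((h1.const_mul (1/2 : ℝ)).sub hl).add (harc.const_mul (ω / a))).const_mul (Cc a ω)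
  unfold G f
  refine H.congr_deriv ?_
  symm
  unfold Cc
  have h1a : (1:ℝ) + (x / a) ^ 2 ≠ 0 := by positivity
  have hωx : ω - x ≠ 0 := fun h => hxω (by linarith [sub_eq_zero.mp h])
  have e3 : 1 / (1 + (x / a) ^ 2) * (1 / a) = a / (x ^ 2 + a ^ 2) := by
    field_simp
    ring
  have e4 : (1:ℝ) / (x - ω) = -(1 / (ω - x)) := by
    rw [← neg_sub ω x, one_div, inv_neg, ← one_div]
  rw [e3, e4]
  field_simp
  ring

lemma tendsto_ratio {l : Filter ℝ} (b ω : ℝ)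
    (hinv : Tendsto (fun x : ℝ => x⁻¹) l (𝓝 0))
    (hev : ∀ᶠ x in l, x ≠ 0 ∧ x ≠ ω) :
    Tendsto (fun x : ℝ => (x ^ 2 + b) / (x - ω) ^ 2) l (𝓝 1) := by
  have h1 : Tendsto (fun x : ℝ => (1 + b * x⁻¹ * x⁻¹) / (1 - ω * x⁻¹) ^ 2) l
      (𝓝 ((1 + b * 0 * 0) / (1 - ω * 0) ^ 2)) := by
    apply Tendsto.div
    · exact tendsto_const_nhds.add (((hinv.const_mul b)).mul hinv)
    · exact (tendsto_const_nhds.sub (hinv.const_mul ω)).pow 2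
    · norm_num
  norm_num at h1
  apply Tendsto.congr' _ h1
  filter_upwards [hev] with x hx
  obtain ⟨hx0, hxω⟩ := hx
  have hxω' : x - ω ≠ 0 := sub_ne_zero.mpr hxω
  field_simp

lemma inv_tendsto_atBot_zero : Tendsto (fun x : ℝ => x⁻¹) atBot (𝓝 0) := by
  have h := ((tendsto_neg_atBot_atTop : Tendsto (Neg.neg : ℝ → ℝ) atBot atTop)).inv_tendsto_atTop
  have h2 := h.neg
  simp only [neg_zero] at h2
  refine h2.congr fun x => ?_
  show -(-x)⁻¹ = x⁻¹
  rw [inv_neg, neg_neg]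

lemma tendsto_G_atTop {a : ℝ} (ha : 0 < a) (ω : ℝ) :
    Tendsto (G a ω) atTop (𝓝 (Cc a ω * (ω / a * (π / 2)))) := by
  have hratio : Tendsto (fun x : ℝ => (x ^ 2 + a ^ 2) / (x - ω) ^ 2) atTop (𝓝 1) :=
    tendsto_ratio _ _ tendsto_inv_atTop_zero (by
      filter_upwards [eventually_gt_atTop 0, eventually_gt_atTop ω] with x h1 h2
      exact ⟨h1.ne', h2.ne'⟩)
  have hlog : Tendsto (fun x : ℝ => (1/2) * Real.log ((x ^ 2 + a ^ 2) / (x - ω) ^ 2))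
      atTop (𝓝 0) := by
    have := ((Real.continuousAt_log one_ne_zero).tendsto.comp hratio).const_mul (1/2 : ℝ)
    simpa using this
  have harc : Tendsto (fun x : ℝ => ω / a * Real.arctan (x / a)) atTop (𝓝 (ω / a * (π / 2))) := by
    have h1 : Tendsto (fun x : ℝ => x / a) atTop atTop := Tendsto.atTop_div_const ha tendsto_id
    have h2 := (tendsto_nhds_of_tendsto_nhdsWithin Real.tendsto_arctan_atTop).comp h1
    exact h2.const_mul (ω / a)
  have hsum := (hlog.add harc).const_mul (Cc a ω)
  rw [show Cc a ω * (ω / a * (π / 2)) = Cc a ω * (0 + ω / a * (π / 2)) by ring]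
  apply Tendsto.congr' _ hsum
  filter_upwards [eventually_gt_atTop ω] with x hx
  have hxω : x - ω ≠ 0 := sub_ne_zero.mpr hx.ne'
  have h2 : x ^ 2 + a ^ 2 ≠ 0 := by positivity
  unfold G
  rw [Real.log_div h2 (pow_ne_zero 2 hxω), Real.log_pow]
  push_cast
  ring

lemma tendsto_G_atBot {a : ℝ} (ha : 0 < a) (ω : ℝ) :
    Tendsto (G a ω) atBot (𝓝 (Cc a ω * (ω / a * (-(π / 2))))) := by
  have hratio : Tendsto (fun x : ℝ => (x ^ 2 + a ^ 2) / (x - ω) ^ 2) atBot (𝓝 1) :=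
    tendsto_ratio _ _ inv_tendsto_atBot_zero (by
      filter_upwards [eventually_lt_atBot 0, eventually_lt_atBot ω] with x h1 h2
      exact ⟨h1.ne, h2.ne⟩)
  have hlog : Tendsto (fun x : ℝ => (1/2) * Real.log ((x ^ 2 + a ^ 2) / (x - ω) ^ 2))
      atBot (𝓝 0) := by
    have := ((Real.continuousAt_log one_ne_zero).tendsto.comp hratio).const_mul (1/2 : ℝ)
    simpa using this
  have harc : Tendsto (fun x : ℝ => ω / a * Real.arctan (x / a)) atBot (𝓝 (ω / a * (-(π / 2)))) := by
    have h1 : Tendsto (fun x : ℝ => x / a) atBot atBot := Tendsto.atBot_div_const ha tendsto_id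
    have h2 := (tendsto_nhds_of_tendsto_nhdsWithin Real.tendsto_arctan_atBot).comp h1
    exact h2.const_mul (ω / a)
  have hsum := (hlog.add harc).const_mul (Cc a ω)
  rw [show Cc a ω * (ω / a * (-(π / 2))) = Cc a ω * (0 + ω / a * (-(π / 2))) by ring]
  apply Tendsto.congr' _ hsum
  filter_upwards [eventually_lt_atBot ω] with x hx
  have hxω : x - ω ≠ 0 := sub_ne_zero.mpr hx.ne
  have h2 : x ^ 2 + a ^ 2 ≠ 0 := by positivity
  unfold G
  rw [Real.log_div h2 (pow_ne_zero 2 hxω), Real.log_pow]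
  push_cast
  ring

lemma integrable_lorentz {a : ℝ} (ha : 0 < a) :
    Integrable (fun x : ℝ => a / (x ^ 2 + a ^ 2)) := by
  have h := (integrable_inv_one_add_sq.comp_div (ne_of_gt ha)).const_mul (1/a)
  have heq : (fun x : ℝ => a / (x ^ 2 + a ^ 2)) = fun x => (1/a) * (1 + (x/a) ^ 2)⁻¹ := by
    funext x
    have h2 : x ^ 2 + a ^ 2 ≠ 0 := by positivity
    have h3 : (1:ℝ) + (x/a) ^ 2 ≠ 0 := by positivity
    field_simp
    ring
  rw [heq]
  exact h

lemma measurableSet_S (ω ε : ℝ) : MeasurableSet {x : ℝ | ε < |ω - x|} :=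
  (isOpen_lt continuous_const (by fun_prop)).measurableSet

lemma integrableOn_f {a : ℝ} (ha : 0 < a) (ω : ℝ) {ε : ℝ} (hε : 0 < ε) :
    IntegrableOn (f a ω) {x : ℝ | ε < |ω - x|} := by
  have hπ := Real.pi_pos
  refine Integrable.mono' (g := fun x => 1 / π * (a / (x ^ 2 + a ^ 2)) / ε)
    (((integrable_lorentz ha).const_mul (1/π)).div_const ε).integrableOn ?_ ?_
  · refine (Measurable.aestronglyMeasurable ?_).restrict
    unfold f
    fun_prop
  · filter_upwards [ae_restrict_mem (measurableSet_S ω ε)] with x hx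
    have hx' : ε ≤ |ω - x| := le_of_lt hx
    have hpos : (0:ℝ) < 1 / π * (a / (x ^ 2 + a ^ 2)) := by positivity
    have : f a ω x = (1 / π * (a / (x ^ 2 + a ^ 2))) / (ω - x) := rfl
    rw [Real.norm_eq_abs, this, abs_div, abs_of_pos hpos]
    gcongr

lemma set_eq (ω : ℝ) {ε : ℝ} (hε : 0 < ε) :
    {x : ℝ | ε < |ω - x|} = Iio (ω - ε) ∪ Ioi (ω + ε) := by
  ext x
  simp only [mem_setOf_eq, mem_union, mem_Iio, mem_Ioi, lt_abs]
  constructor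
  · rintro (h | h)
    · left; linarith
    · right; linarith
  · rintro (h | h)
    · left; linarith
    · right; linarith

lemma integral_eval {a : ℝ} (ha : 0 < a) (ω : ℝ) {ε : ℝ} (hε : 0 < ε) :
    ∫ x in {x : ℝ | ε < |ω - x|}, f a ω x
      = (G a ω (ω - ε) - Cc a ω * (ω / a * (-(π / 2))))
        + (Cc a ω * (ω / a * (π / 2)) - G a ω (ω + ε)) := by
  have hsub1 : Iio (ω - ε) ⊆ {x : ℝ | ε < |ω - x|} := by rw [set_eq ω hε]; exact subset_union_left
  have hsub2 : Ioi (ω + ε) ⊆ {x : ℝ | ε < |ω - x|} := by rw [set_eq ω hε]; exact subset_union_right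
  have hIio : IntegrableOn (f a ω) (Iio (ω - ε)) := (integrableOn_f ha ω hε).mono_set hsub1
  have hIoi : IntegrableOn (f a ω) (Ioi (ω + ε)) := (integrableOn_f ha ω hε).mono_set hsub2
  have hdisj : Disjoint (Iio (ω - ε)) (Ioi (ω + ε)) := by
    refine disjoint_left.mpr fun x hx1 hx2 => ?_
    simp only [mem_Iio] at hx1
    simp only [mem_Ioi] at hx2
    linarith
  rw [set_eq ω hε, setIntegral_union hdisj measurableSet_Ioi hIio hIoi]
  have h1 : ∫ x in Iio (ω - ε), f a ω x = G a ω (ω - ε) - Cc a ω * (ω / a * (-(π / 2))) := by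
    rw [← integral_Iic_eq_integral_Iio]
    apply integral_Iic_of_hasDerivAt_of_tendsto
    · exact (hasDerivAt_G ha (by linarith : ω - ε ≠ ω)).continuousAt.continuousWithinAt
    · intro x hx
      simp only [mem_Iio] at hx
      exact hasDerivAt_G ha (by linarith : x ≠ ω)
    · rw [integrableOn_Iic_iff_integrableOn_Iio]
      exact hIio
    · exact tendsto_G_atBot ha ω
  have h2 : ∫ x in Ioi (ω + ε), f a ω x = Cc a ω * (ω / a * (π / 2)) - G a ω (ω + ε) := by
    apply integral_Ioi_of_hasDerivAt_of_tendsto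
    · exact (hasDerivAt_G ha (by linarith : ω + ε ≠ ω)).continuousAt.continuousWithinAt
    · intro x hx
      simp only [mem_Ioi] at hx
      exact hasDerivAt_G ha (by linarith : x ≠ ω)
    · exact hIoi
    · exact tendsto_G_atTop ha ω
  rw [h1, h2]

noncomputable def Φ (a ω : ℝ) : ℝ → ℝ := fun ε =>
  Cc a ω * ((1/2) * Real.log ((ω - ε) ^ 2 + a ^ 2) - (1/2) * Real.log ((ω + ε) ^ 2 + a ^ 2)
    + (ω / a) * (Real.arctan ((ω - ε) / a) - Real.arctan ((ω + ε) / a)))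
  + Cc a ω * (ω / a * π)

lemma pv {a : ℝ} (ha : 0 < a) (ω : ℝ) :
    Tendsto (fun ε : ℝ => ∫ x in {x : ℝ | ε < |ω - x|}, f a ω x)
      (𝓝[>] 0) (𝓝 (ω / (ω ^ 2 + a ^ 2))) := by
  have hπ := Real.pi_pos
  have hD : (0:ℝ) < ω ^ 2 + a ^ 2 := by positivity
  have hcont : ContinuousAt (Φ a ω) 0 := by
    unfold Φ
    have hl1 : ContinuousAt (fun ε : ℝ => Real.log ((ω - ε) ^ 2 + a ^ 2)) 0 := by
      refine ContinuousAt.log (by fun_prop) ?_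
      show (ω - 0) ^ 2 + a ^ 2 ≠ 0
      positivity
    have hl2 : ContinuousAt (fun ε : ℝ => Real.log ((ω + ε) ^ 2 + a ^ 2)) 0 := by
      refine ContinuousAt.log (by fun_prop) ?_
      show (ω + 0) ^ 2 + a ^ 2 ≠ 0
      positivity
    have ha1 : ContinuousAt (fun ε : ℝ => Real.arctan ((ω - ε) / a)) 0 :=
      (Real.continuous_arctan.comp (by fun_prop)).continuousAt
    have ha2 : ContinuousAt (fun ε : ℝ => Real.arctan ((ω + ε) / a)) 0 :=
      (Real.continuous_arctan.comp (by fun_prop)).continuousAt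
    exact (continuousAt_const.mul (((continuousAt_const.mul hl1).sub
      (continuousAt_const.mul hl2)).add
      (continuousAt_const.mul (ha1.sub ha2)))).add continuousAt_const
  have hΦ0 : Φ a ω 0 = ω / (ω ^ 2 + a ^ 2) := by
    unfold Φ Cc
    norm_num
    field_simp
  have hT : Tendsto (Φ a ω) (𝓝[>] 0) (𝓝 (ω / (ω ^ 2 + a ^ 2))) := by
    rw [← hΦ0]
    exact hcont.tendsto.mono_left nhdsWithin_le_nhds
  apply Tendsto.congr' _ hT
  filter_upwards [self_mem_nhdsWithin] with ε hε
  have hε' : (0:ℝ) < ε := hε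
  rw [integral_eval ha ω hε']
  unfold Φ G
  have e1 : ω - ε - ω = -ε := by ring
  have e2 : ω + ε - ω = ε := by ring
  rw [e1, e2, Real.log_neg_eq_log]
  ring

end LorentzPV

/-- For the Lorentzian `n(ω) = (1/π)(Γ/2)/(ω² + (Γ/2)²)` with `Γ > 0`,
the principal value integral `P∫ n(ω')/(ω − ω') dω'` equals
`ω/(ω² + (Γ/2)²)` for every real `ω`, and consequently the dark-waveguide
coupling rate `Γ(ω) = 2π n(ω)/(H(ω)² + π² n(ω)²)` is the constant `Γ`. -/
theorem lorentzian_markovian_coupling (Γ : ℝ) (hΓ : 0 < Γ)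
    (n : ℝ → ℝ) (hn : ∀ ω, n ω = (1 / π) * ((Γ / 2) / (ω ^ 2 + (Γ / 2) ^ 2)))
    (H : ℝ → ℝ) (hH : ∀ ω, H ω = ω / (ω ^ 2 + (Γ / 2) ^ 2)) :
    (∀ ω : ℝ,
      Tendsto (fun ε : ℝ => ∫ ω' in {x : ℝ | ε < |ω - x|}, n ω' / (ω - ω'))
        (𝓝[>] 0) (𝓝 (H ω))) ∧
    (∀ ω : ℝ, 2 * π * n ω / ((H ω) ^ 2 + π ^ 2 * (n ω) ^ 2) = Γ) := by

  constructor
  · intro ω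
    have h := LorentzPV.pv (a := Γ / 2) (by positivity) ω
    rw [hH ω]
    simp only [hn]
    exact h
  · intro ω
    rw [hn, hH]
    have hπ : π ≠ 0 := Real.pi_ne_zero
    have hD : (0:ℝ) < ω ^ 2 + (Γ / 2) ^ 2 := by positivity
    field_simp
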